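/- In the consensus-based k-IS construction, Immediacy holds: with P6 and P9 defined as before, and aux sets satisfying IS Immediacy (⟨i,−⟩ ∈ aux_j ⇒ aux_i ⊆ aux_j), suppose process i's own pair ⟨i, v_i⟩ belongs to view_j. Distinguish cases: (1) i, j ∈ P6: then view_i = view_j; (2) i ∈ P6, j ∈ P9: then view_i = view ⊆ view_j; (3) i, j ∈ P9: if ⟨i,v_i⟩ ∈ view then i ∈ P6 (contradiction), so ⟨i,v_i⟩ ∈ aux_j, hence aux_i ⊆ aux_j and view_i = view ∪ aux_i ⊆ view ∪ aux_j = view_j. Conclude view_i ⊆ view_j in all cases. -/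
import Mathlib


/-- Immediacy of the consensus-based k-IS construction.
A process i with its own pair in the consensus output `view` returns `view`;
otherwise it returns `view ∪ aux i`, where the aux sets satisfy IS
Self-inclusion and Immediacy. Then `⟨i, v_i⟩ ∈ view_j → view_i ⊆ view_j`. -/
theorem cons_kIS_immediacy
    {ι Val : Type} [DecidableEq ι] [DecidableEq Val]
    (view : Finset (ι × Val))
    (vals : ι → Val)                          -- v_i, the value written by i
    (aux : ι → Finset (ι × Val))
    (returned : ι → Finset (ι × Val))
    (hselfaux : ∀ i, (i, vals i) ∈ aux i)     -- IS Self-inclusion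
    (hImmAux : ∀ i j, (∃ v, (i, v) ∈ aux j) → aux i ⊆ aux j)  -- IS Immediacy
    (hretIn : ∀ i, (i, vals i) ∈ view → returned i = view)         -- P6
    (hretOut : ∀ i, (i, vals i) ∉ view → returned i = view ∪ aux i) -- P9
    :
    ∀ i j, (i, vals i) ∈ returned j → returned i ⊆ returned j := by
  intro i j hij
  by_cases hi : (i, vals i) ∈ view
  · rw [hretIn i hi]
    by_cases hj : (j, vals j) ∈ view
    · rw [hretIn j hj]
    · rw [hretOut j hj]; intro x hx; exact Finset.mem_union_left _ hx
  · rw [hretOut i hi]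
    by_cases hj : (j, vals j) ∈ view
    · rw [hretIn j hj] at hij; exact absurd hij hi
    · rw [hretOut j hj] at hij ⊢
      rcases Finset.mem_union.mp hij with h | h
      · exact absurd h hi
      · intro x hx
        rcases Finset.mem_union.mp hx with h1 | h1
        · exact Finset.mem_union_left _ h1
        · exact Finset.mem_union_right _ (hImmAux i j ⟨_, h⟩ h1)
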